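/- arXiv:1810.10563 — 6 statements merged into one kernel-verified Lean document; each statement's English description precedes it below -/
import Mathlib

section
/- Let u ∈ ℝ^k and let 0 ≤ p ≤ q ≤ 1. Let F = {z ∈ ℝ^k : z ≥ 0 componentwise, p ≤ ∑_j z_j ≤ q} and let S = ∑_j max(u_j, 0) be the sum of the positive entries of u. If S < p, then every minimizer z* of ‖u − z‖² over F satisfies ∑_j z*_j = p; consequently, z* minimizes ‖u − z‖² over F if and only if z* minimizes ‖u − z‖² over the scaled simplex Δ_p = {z ∈ ℝ^k : z ≥ 0 componentwise, ∑_j z_j = p}. -/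
lemma nsq {k : ℕ} (x : EuclideanSpace ℝ (Fin k)) : ‖x‖ ^ 2 = ∑ j, (x j) ^ 2 := by
  rw [EuclideanSpace.norm_eq, Real.sq_sqrt (by positivity)]
  simp [sq_abs]

lemma nsq_sub {k : ℕ} (u x : EuclideanSpace ℝ (Fin k)) :
    ‖u - x‖ ^ 2 = ∑ j, (u j - x j) ^ 2 := by
  rw [nsq]
  simp

/-- Key construction: any feasible point with sum ≥ p can be pushed to the simplex
without increasing the distance, strictly if its sum exceeds p. -/
lemma key {k : ℕ} (u : EuclideanSpace ℝ (Fin k)) (p : ℝ)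
    (hS : ∑ j, max (u j) 0 < p)
    (w : EuclideanSpace ℝ (Fin k)) (hw0 : ∀ j, 0 ≤ w j) (hwp : p ≤ ∑ j, w j) :
    ∃ w' : EuclideanSpace ℝ (Fin k), (∀ j, 0 ≤ w' j) ∧ (∑ j, w' j = p) ∧
      (∑ j, (u j - w' j) ^ 2 ≤ ∑ j, (u j - w j) ^ 2) ∧
      (p < ∑ j, w j → ∑ j, (u j - w' j) ^ 2 < ∑ j, (u j - w j) ^ 2) := by
  set ℓ : Fin k → ℝ := fun j => min (w j) (max (u j) 0) with hℓ
  have hℓ0 : ∀ j, 0 ≤ ℓ j := fun j => le_min (hw0 j) (le_max_right _ _)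
  have hℓw : ∀ j, ℓ j ≤ w j := fun j => min_le_left _ _
  have hℓalt : ∀ j, u j ≤ ℓ j ∨ ℓ j = w j := by
    intro j
    rcases le_total (w j) (max (u j) 0) with h | h
    · exact Or.inr (min_eq_left h)
    · exact Or.inl (by rw [hℓ]; simp only [min_eq_right h]; exact le_max_left _ _)
  have hSℓ : ∑ j, ℓ j < p :=
    lt_of_le_of_lt (Finset.sum_le_sum fun j _ => min_le_right _ _) hS
  have hden : 0 < ∑ j, w j - ∑ j, ℓ j := by linarith
  set θ : ℝ := (p - ∑ j, ℓ j) / (∑ j, w j - ∑ j, ℓ j) with hθ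
  have hθ0 : 0 ≤ θ := div_nonneg (by linarith) hden.le
  have hθ1 : θ ≤ 1 := by
    rw [hθ, div_le_one hden]; linarith
  set w' : EuclideanSpace ℝ (Fin k) := WithLp.toLp 2 (fun j => ℓ j + θ * (w j - ℓ j)) with hw'
  have hbetl : ∀ j, ℓ j ≤ w' j := by
    intro j
    have : 0 ≤ θ * (w j - ℓ j) := mul_nonneg hθ0 (by linarith [hℓw j])
    simp only [hw', PiLp.toLp_apply]; linarith
  have hbetw : ∀ j, w' j ≤ w j := by
    intro j
    have h1 : θ * (w j - ℓ j) ≤ 1 * (w j - ℓ j) :=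
      mul_le_mul_of_nonneg_right hθ1 (by linarith [hℓw j])
    simp only [hw', PiLp.toLp_apply]; linarith
  have hw'0 : ∀ j, 0 ≤ w' j := fun j => le_trans (hℓ0 j) (hbetl j)
  have hsum : ∑ j, w' j = p := by
    have : ∑ j, w' j = ∑ j, ℓ j + θ * (∑ j, w j - ∑ j, ℓ j) := by
      simp only [hw', PiLp.toLp_apply]
      rw [Finset.sum_add_distrib, ← Finset.mul_sum, Finset.sum_sub_distrib]
    rw [this, hθ, div_mul_cancel₀ _ hden.ne']
    ring
  have hcoord : ∀ j, (u j - w' j) ^ 2 ≤ (u j - w j) ^ 2 := by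
    intro j
    rcases hℓalt j with h | h
    · have h1 : u j ≤ w' j := le_trans h (hbetl j)
      have h2 : |u j - w' j| ≤ |u j - w j| := by
        rw [abs_sub_comm, abs_sub_comm (u j), abs_of_nonneg (by linarith),
          abs_of_nonneg (by linarith [hℓw j, h])]
        linarith [hbetw j]
      calc (u j - w' j) ^ 2 = |u j - w' j| ^ 2 := (sq_abs _).symm
        _ ≤ |u j - w j| ^ 2 := by
            exact pow_le_pow_left₀ (abs_nonneg _) h2 2
        _ = (u j - w j) ^ 2 := sq_abs _
    · have : w' j = w j := le_antisymm (hbetw j) (by rw [← h]; exact hbetl j)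
      rw [this]
  refine ⟨w', hw'0, hsum, Finset.sum_le_sum fun j _ => hcoord j, ?_⟩
  intro hlt
  have hex : ∃ j : Fin k, w' j < w j := by
    by_contra hc
    push_neg at hc
    have : ∑ j, w j ≤ ∑ j, w' j := Finset.sum_le_sum fun j _ => hc j
    rw [hsum] at this; linarith
  obtain ⟨j0, hj0⟩ := hex
  have hne : (Finset.univ : Finset (Fin k)).Nonempty := ⟨j0, Finset.mem_univ _⟩
  apply Finset.sum_lt_sum (fun j _ => hcoord j)
  refine ⟨j0, Finset.mem_univ _, ?_⟩
  have hℓlt : ℓ j0 < w j0 := lt_of_le_of_lt (hbetl j0) hj0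
  have hu : u j0 ≤ ℓ j0 := by
    rcases hℓalt j0 with h | h
    · exact h
    · exact absurd h (ne_of_lt hℓlt)
  have h1 : u j0 ≤ w' j0 := le_trans hu (hbetl j0)
  have h2 : |u j0 - w' j0| < |u j0 - w j0| := by
    rw [abs_sub_comm, abs_sub_comm (u j0), abs_of_nonneg (by linarith),
      abs_of_nonneg (by linarith)]
    linarith
  calc (u j0 - w' j0) ^ 2 = |u j0 - w' j0| ^ 2 := (sq_abs _).symm
    _ < |u j0 - w j0| ^ 2 := by
        exact pow_lt_pow_left₀ h2 (abs_nonneg _) (by norm_num)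
    _ = (u j0 - w j0) ^ 2 := sq_abs _

/-- If the sum `S` of positive entries of `u` satisfies `S < p`, then every
minimizer of `‖u − z‖²` over `F = {z ≥ 0, p ≤ 1ᵀz ≤ q}` has `1ᵀz = p`, and minimizing
over `F` is equivalent to minimizing over the scaled simplex `Δ_p`. -/
theorem stmt_1 (k : ℕ) (u : EuclideanSpace ℝ (Fin k)) (p q : ℝ)
    (hp : 0 ≤ p) (hpq : p ≤ q) (hq : q ≤ 1)
    (F : Set (EuclideanSpace ℝ (Fin k)))
    (hF : F = {z | (∀ j, 0 ≤ z j) ∧ p ≤ ∑ j, z j ∧ ∑ j, z j ≤ q})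
    (Δp : Set (EuclideanSpace ℝ (Fin k)))
    (hΔp : Δp = {z | (∀ j, 0 ≤ z j) ∧ ∑ j, z j = p})
    (hS : ∑ j, max (u j) 0 < p) :
    (∀ z ∈ F, (∀ w ∈ F, ‖u - z‖ ^ 2 ≤ ‖u - w‖ ^ 2) → ∑ j, z j = p) ∧
    (∀ z, (z ∈ F ∧ ∀ w ∈ F, ‖u - z‖ ^ 2 ≤ ‖u - w‖ ^ 2) ↔
      (z ∈ Δp ∧ ∀ w ∈ Δp, ‖u - z‖ ^ 2 ≤ ‖u - w‖ ^ 2)) := by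
  subst hF hΔp
  have hΔF : ∀ z : EuclideanSpace ℝ (Fin k),
      ((∀ j, 0 ≤ z j) ∧ ∑ j, z j = p) →
      ((∀ j, 0 ≤ z j) ∧ p ≤ ∑ j, z j ∧ ∑ j, z j ≤ q) := by
    rintro z ⟨h0, hs⟩
    exact ⟨h0, by rw [hs], by rw [hs]; exact hpq⟩
  have part1 : ∀ z ∈ {z : EuclideanSpace ℝ (Fin k) |
      (∀ j, 0 ≤ z j) ∧ p ≤ ∑ j, z j ∧ ∑ j, z j ≤ q},
      (∀ w ∈ {z : EuclideanSpace ℝ (Fin k) |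
        (∀ j, 0 ≤ z j) ∧ p ≤ ∑ j, z j ∧ ∑ j, z j ≤ q},
        ‖u - z‖ ^ 2 ≤ ‖u - w‖ ^ 2) → ∑ j, z j = p := by
    rintro z ⟨hz0, hzp, hzq⟩ hmin
    by_contra hne
    have hlt : p < ∑ j, z j := lt_of_le_of_ne hzp (Ne.symm hne)
    obtain ⟨w', hw'0, hw'sum, _, hstrict⟩ := key u p hS z hz0 hzp
    have hw'F : w' ∈ {z : EuclideanSpace ℝ (Fin k) |
        (∀ j, 0 ≤ z j) ∧ p ≤ ∑ j, z j ∧ ∑ j, z j ≤ q} :=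
      ⟨hw'0, by rw [hw'sum], by rw [hw'sum]; exact hpq⟩
    have := hmin w' hw'F
    rw [nsq_sub, nsq_sub] at this
    linarith [hstrict hlt]
  refine ⟨part1, fun z => ⟨?_, ?_⟩⟩
  · rintro ⟨hzF, hmin⟩
    have hsum := part1 z hzF hmin
    refine ⟨⟨hzF.1, hsum⟩, fun w hw => hmin w (hΔF w hw)⟩
  · rintro ⟨hzΔ, hmin⟩
    refine ⟨hΔF z hzΔ, ?_⟩
    rintro w ⟨hw0, hwp, hwq⟩
    obtain ⟨w', hw'0, hw'sum, hle, _⟩ := key u p hS w hw0 hwp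
    have h1 := hmin w' ⟨hw'0, hw'sum⟩
    rw [nsq_sub u z, nsq_sub u w'] at h1
    rw [nsq_sub u z, nsq_sub u w]
    linarith
end

section
/- Let u ∈ ℝ^k and let 0 ≤ p ≤ q ≤ 1. Let F = {z ∈ ℝ^k : z ≥ 0 componentwise, p ≤ ∑_j z_j ≤ q} and let S = ∑_j max(u_j, 0) be the sum of the positive entries of u. If S > q, then every minimizer z* of ‖u − z‖² over F satisfies ∑_j z*_j = q; consequently, z* minimizes ‖u − z‖² over F if and only if z* minimizes ‖u − z‖² over the scaled simplex Δ_q = {z ∈ ℝ^k : z ≥ 0 componentwise, ∑_j z_j = q}. -/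
lemma normsq_eq (k : ℕ) (x : EuclideanSpace ℝ (Fin k)) : ‖x‖ ^ 2 = ∑ j, x j ^ 2 := by
  rw [EuclideanSpace.norm_eq, Real.sq_sqrt (by positivity)]
  simp [sq_abs]

lemma key_lemma (k : ℕ) (u : EuclideanSpace ℝ (Fin k)) (q : ℝ)
    (hS : q < ∑ j, max (u j) 0)
    (w : EuclideanSpace ℝ (Fin k)) (hw : ∀ j, 0 ≤ w j) (hws : ∑ j, w j ≤ q) :
    ∃ w' : EuclideanSpace ℝ (Fin k), (∀ j, 0 ≤ w' j) ∧ (∑ j, w' j = q) ∧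
      ‖u - w'‖ ^ 2 ≤ ‖u - w‖ ^ 2 ∧ (∑ j, w j < q → ‖u - w'‖ ^ 2 < ‖u - w‖ ^ 2) := by
  set v : Fin k → ℝ := fun j => max (u j - w j) 0 with hv
  set V : ℝ := ∑ j, v j with hV
  set s : ℝ := ∑ j, w j with hs
  have hVge : (∑ j, max (u j) 0) - s ≤ V := by
    rw [hV, hs, ← Finset.sum_sub_distrib]
    apply Finset.sum_le_sum
    intro j _
    rcases le_or_gt 0 (u j) with h | h
    · rw [max_eq_left h]
      calc u j - w j ≤ max (u j - w j) 0 := le_max_left _ _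
        _ = v j := rfl
    · have h1 := hw j
      have : max (u j) 0 - w j ≤ 0 := by rw [max_eq_right h.le]; linarith
      calc max (u j) 0 - w j ≤ 0 := this
        _ ≤ v j := le_max_right _ _
  have hVpos : 0 < V := by
    have : 0 ≤ q - s := by linarith
    linarith
  set t : ℝ := (q - s) / V with ht
  have ht0 : 0 ≤ t := div_nonneg (by linarith) hVpos.le
  have ht1 : t < 1 := by
    rw [ht, div_lt_one hVpos]
    linarith
  set w' : EuclideanSpace ℝ (Fin k) := WithLp.toLp 2 (fun j => w j + t * v j) with hw'
  have happ : ∀ i, (u - w') i = u i - w i - t * v i := by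
    intro i
    have : w' i = w i + t * v i := rfl
    simp [PiLp.sub_apply, this]
    ring
  have happ2 : ∀ i, (u - w) i = u i - w i := by
    intro i; simp [PiLp.sub_apply]
  have hterm : ∀ i, (u i - w i - t * v i) ^ 2 ≤ (u i - w i) ^ 2 := by
    intro i
    rcases le_or_gt (u i - w i) 0 with h | h
    · have : v i = 0 := max_eq_right h
      rw [this]; ring_nf; exact le_refl _
    · have hvi : v i = u i - w i := max_eq_left h.le
      rw [hvi]
      have heq : u i - w i - t * (u i - w i) = (1 - t) * (u i - w i) := by ring
      rw [heq, mul_pow]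
      have h1 : (1 - t) ^ 2 ≤ 1 := by nlinarith
      nlinarith [mul_nonneg (sub_nonneg.mpr h1) (sq_nonneg (u i - w i))]
  refine ⟨w', ?_, ?_, ?_, ?_⟩
  · intro j
    have h1 : 0 ≤ v j := le_max_right _ _
    have h2 := hw j
    have : w' j = w j + t * v j := rfl
    rw [this]; positivity
  · show ∑ j, (w j + t * v j) = q
    rw [Finset.sum_add_distrib, ← Finset.mul_sum, ← hV, ← hs, ht,
      div_mul_cancel₀ _ hVpos.ne']
    ring
  · rw [normsq_eq, normsq_eq]
    apply Finset.sum_le_sum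
    intro i _
    rw [happ i, happ2 i]
    exact hterm i
  · intro hlt
    have ht0' : 0 < t := div_pos (by linarith) hVpos
    obtain ⟨j, _, hj⟩ : ∃ j ∈ Finset.univ, 0 < v j := by
      by_contra hcon
      push_neg at hcon
      have : V ≤ 0 := Finset.sum_nonpos (fun j hjm => hcon j hjm)
      linarith
    rw [normsq_eq, normsq_eq]
    apply Finset.sum_lt_sum
    · intro i _
      rw [happ i, happ2 i]
      exact hterm i
    · refine ⟨j, Finset.mem_univ j, ?_⟩
      rw [happ j, happ2 j]
      have h : 0 < u j - w j := by
        by_contra h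
        push_neg at h
        have : v j = 0 := max_eq_right h
        rw [this] at hj; linarith
      have hvj : v j = u j - w j := max_eq_left h.le
      rw [hvj]
      have heq : u j - w j - t * (u j - w j) = (1 - t) * (u j - w j) := by ring
      rw [heq, mul_pow]
      have h1 : (1 - t) ^ 2 < 1 := by nlinarith
      nlinarith [mul_pos (by nlinarith : (0:ℝ) < 1 - (1 - t) ^ 2) (pow_pos h 2)]

/-- If the sum `S` of positive entries of `u` satisfies `S > q`, then every
minimizer of `‖u − z‖²` over `F = {z ≥ 0, p ≤ 1ᵀz ≤ q}` has `1ᵀz = q`, and minimizing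
over `F` is equivalent to minimizing over the scaled simplex `Δ_q`. -/
theorem stmt_3 (k : ℕ) (u : EuclideanSpace ℝ (Fin k)) (p q : ℝ)
    (hp : 0 ≤ p) (hpq : p ≤ q) (hq : q ≤ 1)
    (F : Set (EuclideanSpace ℝ (Fin k)))
    (hF : F = {z | (∀ j, 0 ≤ z j) ∧ p ≤ ∑ j, z j ∧ ∑ j, z j ≤ q})
    (Δq : Set (EuclideanSpace ℝ (Fin k)))
    (hΔq : Δq = {z | (∀ j, 0 ≤ z j) ∧ ∑ j, z j = q})
    (hS : q < ∑ j, max (u j) 0) :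
    (∀ z ∈ F, (∀ w ∈ F, ‖u - z‖ ^ 2 ≤ ‖u - w‖ ^ 2) → ∑ j, z j = q) ∧
    (∀ z, (z ∈ F ∧ ∀ w ∈ F, ‖u - z‖ ^ 2 ≤ ‖u - w‖ ^ 2) ↔
      (z ∈ Δq ∧ ∀ w ∈ Δq, ‖u - z‖ ^ 2 ≤ ‖u - w‖ ^ 2)) := by
  subst hF hΔq
  have hΔF : ∀ w : EuclideanSpace ℝ (Fin k), (∀ j, 0 ≤ w j) → ∑ j, w j = q →
      w ∈ {z : EuclideanSpace ℝ (Fin k) | (∀ j, 0 ≤ z j) ∧ p ≤ ∑ j, z j ∧ ∑ j, z j ≤ q} := by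
    intro w h1 h2
    exact ⟨h1, by rw [h2]; exact hpq, by rw [h2]⟩
  have part1 : ∀ z ∈ {z : EuclideanSpace ℝ (Fin k) |
      (∀ j, 0 ≤ z j) ∧ p ≤ ∑ j, z j ∧ ∑ j, z j ≤ q},
      (∀ w ∈ {z : EuclideanSpace ℝ (Fin k) |
        (∀ j, 0 ≤ z j) ∧ p ≤ ∑ j, z j ∧ ∑ j, z j ≤ q}, ‖u - z‖ ^ 2 ≤ ‖u - w‖ ^ 2) →
      ∑ j, z j = q := by
    intro z hz hmin
    obtain ⟨hz1, hz2, hz3⟩ := hz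
    by_contra hne
    have hlt : ∑ j, z j < q := lt_of_le_of_ne hz3 hne
    obtain ⟨w', hw'1, hw'2, _, hw'4⟩ := key_lemma k u q hS z hz1 hz3
    have := hmin w' (hΔF w' hw'1 hw'2)
    have := hw'4 hlt
    linarith
  refine ⟨part1, fun z => ⟨?_, ?_⟩⟩
  · rintro ⟨hz, hmin⟩
    have hsum := part1 z hz hmin
    exact ⟨⟨hz.1, hsum⟩, fun w hw => hmin w (hΔF w hw.1 hw.2)⟩
  · rintro ⟨⟨hz1, hz2⟩, hmin⟩
    refine ⟨hΔF z hz1 hz2, fun w hw => ?_⟩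
    obtain ⟨hw1, hw2, hw3⟩ := hw
    obtain ⟨w', hw'1, hw'2, hw'3, _⟩ := key_lemma k u q hS w hw1 hw3
    exact le_trans (hmin w' ⟨hw'1, hw'2⟩) hw'3
end

section
/- Let n, k be natural numbers with 1 ≤ k ≤ n, let K ⊆ {1,...,n} with |K| = k, and define B = {w ∈ ℝⁿ : w ≥ 0 componentwise, ∑_j w_j = 1, and w_j = 0 for all j ∉ K} and C = {w ∈ ℝⁿ : w ≥ 0 componentwise, ∑_j w_j = 1, ‖w‖₀ ≤ k}. Suppose w̄ ∈ B satisfies w̄_j > 0 for every j ∈ K. Then the Fréchet normal cone of C at w̄ equals the normal cone of the convex set B at w̄: N̂_C(w̄) = N_B(w̄). -/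
open scoped RealInnerProductSpace

lemma coord_le_norm {n : ℕ} (x : EuclideanSpace ℝ (Fin n)) (j : Fin n) : |x j| ≤ ‖x‖ := by
  rw [EuclideanSpace.norm_eq]
  have h : |x j| = Real.sqrt ((x j)^2) := (Real.sqrt_sq_eq_abs _).symm
  rw [h]
  apply Real.sqrt_le_sqrt
  have := Finset.single_le_sum (f := fun i => ‖x i‖^2) (fun i _ => by positivity) (Finset.mem_univ j)
  simpa [Real.norm_eq_abs, sq_abs] using this

/-- The Fréchet normal cone of a set `C` at `x`: vectors `v` such that
`liminf_{u → x, u ∈ C, u ≠ x} −⟨v, u − x⟩ / ‖u − x‖ ≥ 0`, stated in ε-δ form: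
for every `ε > 0` there is `δ > 0` with `⟨v, u − x⟩ ≤ ε‖u − x‖` for all `u ∈ C`
with `u ≠ x` and `‖u − x‖ < δ`. -/
def frechetNormalCone {E : Type*} [NormedAddCommGroup E] [InnerProductSpace ℝ E]
    (C : Set E) (x : E) : Set E :=
  {v | ∀ ε > 0, ∃ δ > 0, ∀ u ∈ C, u ≠ x → ‖u - x‖ < δ → ⟪v, u - x⟫ ≤ ε * ‖u - x‖}

/-- For the cardinality-constrained simplex `C` and the face `B` supported
on a `k`-element set `K`, at any `w̄ ∈ B` positive on all of `K`, the Fréchet normal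
cone of `C` equals the (convex) normal cone of `B`. -/
theorem stmt_4 (n k : ℕ) (hk1 : 1 ≤ k) (hkn : k ≤ n)
    (K : Finset (Fin n)) (hK : K.card = k)
    (B C : Set (EuclideanSpace ℝ (Fin n)))
    (hB : B = {w | (∀ j, 0 ≤ w j) ∧ ∑ j, w j = 1 ∧ ∀ j ∉ K, w j = 0})
    (hC : C = {w | (∀ j, 0 ≤ w j) ∧ ∑ j, w j = 1 ∧
      (Finset.univ.filter (fun j => w j ≠ 0)).card ≤ k})
    (wbar : EuclideanSpace ℝ (Fin n)) (hwB : wbar ∈ B)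
    (hpos : ∀ j ∈ K, 0 < wbar j) :
    frechetNormalCone C wbar = {v | ∀ w ∈ B, ⟪v, w - wbar⟫ ≤ 0} := by
  subst hB hC
  obtain ⟨hw0, hw1, hwK⟩ := hwB
  ext v
  simp only [frechetNormalCone, Set.mem_setOf_eq]
  constructor
  · intro hv w hw
    obtain ⟨hw0', hw1', hwK'⟩ := hw
    by_cases hww : w = wbar
    · simp [hww]
    have hc : 0 < ‖w - wbar‖ := by
      simpa [sub_eq_zero] using hww
    have key : ∀ ε > (0:ℝ), ⟪v, w - wbar⟫ ≤ ε := by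
      intro ε hε
      obtain ⟨δ, hδpos, hδ⟩ := hv (ε / ‖w - wbar‖) (by positivity)
      obtain ⟨t, ht0, ht1, htδ⟩ : ∃ t : ℝ, 0 < t ∧ t ≤ 1 ∧ t * ‖w - wbar‖ < δ := by
        refine ⟨min 1 (δ / (2 * ‖w - wbar‖)), by positivity, min_le_left _ _, ?_⟩
        calc min 1 (δ / (2*‖w-wbar‖)) * ‖w - wbar‖
            ≤ (δ / (2*‖w-wbar‖)) * ‖w-wbar‖ := by gcongr; exact min_le_right _ _
          _ = δ/2 := by field_simp
          _ < δ := by linarith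
      set u : EuclideanSpace ℝ (Fin n) := wbar + t • (w - wbar) with hu_def
      have hu : ∀ j, u j = (1-t) * wbar j + t * w j := by
        intro j
        simp [hu_def, PiLp.add_apply, PiLp.smul_apply, PiLp.sub_apply, smul_eq_mul]
        ring
      have husub : u - wbar = t • (w - wbar) := by
        simp [hu_def]
      have hune : u ≠ wbar := by
        intro h
        apply hww
        have : t • (w - wbar) = 0 := by rw [← husub, h, sub_self]
        have := smul_eq_zero.mp this
        rcases this with h1 | h2
        · exact absurd h1 (ne_of_gt ht0)
        · exact sub_eq_zero.mp h2 ▸ rfl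
      have hnorm : ‖u - wbar‖ = t * ‖w - wbar‖ := by
        rw [husub, norm_smul, Real.norm_eq_abs, abs_of_pos ht0]
      have huC : (∀ j, 0 ≤ u j) ∧ ∑ j, u j = 1 ∧
          (Finset.univ.filter (fun j => u j ≠ 0)).card ≤ k := by
        refine ⟨fun j => ?_, ?_, ?_⟩
        · rw [hu]
          have := hw0' j; have := hw0 j
          nlinarith
        · have : ∑ j, u j = ∑ j, ((1-t) * wbar j + t * w j) := by
            exact Finset.sum_congr rfl fun j _ => hu j
          rw [this, Finset.sum_add_distrib, ← Finset.mul_sum, ← Finset.mul_sum, hw1, hw1']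
          ring
        · have hsub : (Finset.univ.filter (fun j => u j ≠ 0)) ⊆ K := by
            intro j hj
            rw [Finset.mem_filter] at hj
            by_contra hjK
            exact hj.2 (by rw [hu, hwK j hjK, hwK' j hjK]; ring)
          calc _ ≤ K.card := Finset.card_le_card hsub
            _ = k := hK
      have := hδ u huC hune (by rw [hnorm]; exact htδ)
      rw [husub, real_inner_smul_right, norm_smul, Real.norm_eq_abs, abs_of_pos ht0] at this
      have h2 : t * ⟪v, w - wbar⟫ ≤ t * ε := by
        calc t * ⟪v, w - wbar⟫ ≤ ε / ‖w - wbar‖ * (t * ‖w - wbar‖) := this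
          _ = t * ε := by field_simp
      exact (mul_le_mul_iff_right₀ ht0).mp h2
    linarith [le_of_forall_pos_le_add (by intro ε hε; linarith [key ε hε] : ∀ ε > (0:ℝ), ⟪v, w - wbar⟫ ≤ 0 + ε)]
  · intro hv ε hε
    have hKne : K.Nonempty := Finset.card_pos.mp (by omega)
    refine ⟨K.inf' hKne wbar, ?_, ?_⟩
    · show (0:ℝ) < _
      rw [Finset.lt_inf'_iff]
      exact fun j hj => hpos j hj
    · intro u hu hne hnorm
      obtain ⟨hu0, hu1, huk⟩ := hu
      have hmem : ∀ j ∈ K, u j ≠ 0 := by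
        intro j hj
        have h1 : |(u - wbar) j| ≤ ‖u - wbar‖ := coord_le_norm _ j
        have h2 : (u - wbar) j = u j - wbar j := by simp
        have h3 : K.inf' hKne wbar ≤ wbar j := Finset.inf'_le _ hj
        rw [h2] at h1
        intro h0
        rw [h0, zero_sub, abs_neg, abs_of_pos (hpos j hj)] at h1
        linarith
      have hsubK : K ⊆ Finset.univ.filter (fun j => u j ≠ 0) := by
        intro j hj
        rw [Finset.mem_filter]
        exact ⟨Finset.mem_univ j, hmem j hj⟩
      have heq : K = Finset.univ.filter (fun j => u j ≠ 0) :=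
        Finset.eq_of_subset_of_card_le hsubK (by rw [hK]; exact huk)
      have huB : (∀ j, 0 ≤ u j) ∧ ∑ j, u j = 1 ∧ ∀ j ∉ K, u j = 0 := by
        refine ⟨hu0, hu1, fun j hj => ?_⟩
        by_contra h
        exact hj (heq ▸ Finset.mem_filter.mpr ⟨Finset.mem_univ j, h⟩)
      have := hv u huB
      have : (0:ℝ) ≤ ε * ‖u - wbar‖ := by positivity
      linarith [hv u huB]
end

section
/- Let n, k be natural numbers with 1 ≤ k ≤ n, let K ⊆ {1,...,n} with |K| = k, and define C = {w ∈ ℝⁿ : w ≥ 0 componentwise, ∑_j w_j = 1, ‖w‖₀ ≤ k}. Suppose w̄ ∈ C satisfies w̄_j > 0 for every j ∈ K and w̄_j = 0 for every j ∉ K. Then the limiting normal cone of C at w̄ equals the Fréchet normal cone of C at w̄: N_C(w̄) = N̂_C(w̄). -/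
open scoped RealInnerProductSpace

/-- The limiting (Mordukhovich) normal cone of `C` at `x`: limits `v` of sequences
`vⱼ ∈ N̂_C(wⱼ)` with `wⱼ ∈ C`, `wⱼ → x`. -/
def limitingNormalCone {E : Type*} [NormedAddCommGroup E] [InnerProductSpace ℝ E]
    (C : Set E) (x : E) : Set E :=
  {v | ∃ w vs : ℕ → E, (∀ j, w j ∈ C) ∧ Filter.Tendsto w Filter.atTop (nhds x) ∧
    (∀ j, vs j ∈ frechetNormalCone C (w j)) ∧ Filter.Tendsto vs Filter.atTop (nhds v)}

/-- For the cardinality-constrained simplex `C`, at a point `w̄` with full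
support cardinality `k` (positive exactly on a `k`-element set `K`), the limiting normal
cone coincides with the Fréchet normal cone. -/
theorem stmt_7 (n k : ℕ) (hk1 : 1 ≤ k) (hkn : k ≤ n)
    (K : Finset (Fin n)) (hK : K.card = k)
    (C : Set (EuclideanSpace ℝ (Fin n)))
    (hC : C = {w | (∀ j, 0 ≤ w j) ∧ ∑ j, w j = 1 ∧
      (Finset.univ.filter (fun j => w j ≠ 0)).card ≤ k})
    (wbar : EuclideanSpace ℝ (Fin n)) (hwC : wbar ∈ C)
    (hpos : ∀ j ∈ K, 0 < wbar j) (hzero : ∀ j ∉ K, wbar j = 0) :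
    limitingNormalCone C wbar = frechetNormalCone C wbar := by
  classical
  have hKne : K.Nonempty := Finset.card_pos.mp (by omega)
  set δ₀ := K.inf' hKne wbar with hδ₀def
  have hδ₀pos : 0 < δ₀ := by
    rw [hδ₀def, Finset.lt_inf'_iff]; exact hpos
  have hδ₀le : ∀ j ∈ K, δ₀ ≤ wbar j := fun j hj => Finset.inf'_le _ hj
  -- local structure of C near wbar
  have hloc : ∀ w : EuclideanSpace ℝ (Fin n), w ∈ C → ‖w - wbar‖ < δ₀ →
      (∀ j ∈ K, 0 < w j) ∧ (∀ j ∉ K, w j = 0) := by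
    intro w hw hnear
    rw [hC] at hw
    obtain ⟨hnn, hsum, hcard⟩ := hw
    have hposw : ∀ j ∈ K, 0 < w j := by
      intro j hj
      have h1 : |w j - wbar j| ≤ ‖w - wbar‖ := by
        have := coord_le_norm (w - wbar) j
        simpa using this
      have h2 := abs_lt.mp (lt_of_le_of_lt h1 hnear)
      have := hδ₀le j hj
      linarith [h2.1]
    refine ⟨hposw, ?_⟩
    have hsub : K ⊆ Finset.univ.filter (fun j => w j ≠ 0) := by
      intro j hj
      simp only [Finset.mem_filter, Finset.mem_univ, true_and]
      exact (hposw j hj).ne'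
    have heq : K = Finset.univ.filter (fun j => w j ≠ 0) :=
      Finset.eq_of_subset_of_card_le hsub (by rw [hK]; exact hcard)
    intro j hj
    by_contra hne
    exact hj (heq ▸ (Finset.mem_filter.mpr ⟨Finset.mem_univ j, hne⟩))
  -- key: inner products with tangent directions are ≤ 0 at nearby points
  have hkey : ∀ d : EuclideanSpace ℝ (Fin n), (∀ j ∉ K, d j = 0) → ∑ j, d j = 0 →
      ∀ w ∈ C, ‖w - wbar‖ < δ₀ → ∀ v ∈ frechetNormalCone C w, ⟪v, d⟫ ≤ 0 := by
    intro d hd0 hdsum w hw hnear v hv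
    by_cases hd : d = 0
    · simp [hd]
    have hdn : 0 < ‖d‖ := norm_pos_iff.mpr hd
    obtain ⟨hwpos, hwzero⟩ := hloc w hw hnear
    have hm : 0 < K.inf' hKne w := by rw [Finset.lt_inf'_iff]; exact hwpos
    set m := K.inf' hKne w with hmdef
    have hmle : ∀ j ∈ K, m ≤ w j := fun j hj => Finset.inf'_le _ hj
    refine le_of_forall_pos_le_add (fun ε hε => ?_)
    rw [zero_add]
    obtain ⟨δ, hδpos, hprop⟩ := hv (ε / ‖d‖) (div_pos hε hdn)
    set t := min δ m / (2 * ‖d‖) with htdef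
    have htpos : 0 < t :=
      div_pos (lt_min hδpos hm) (by positivity)
    have htd : t * ‖d‖ = min δ m / 2 := by
      rw [htdef]; field_simp
    have htdlt : t * ‖d‖ < δ := by
      rw [htd]; have := min_le_left δ m; linarith [lt_min hδpos hm]
    have htdm : t * ‖d‖ < m := by
      rw [htd]; have := min_le_right δ m; linarith [lt_min hδpos hm]
    set u : EuclideanSpace ℝ (Fin n) := w + t • d with hudef
    have huapp : ∀ j, u j = w j + t * d j := fun j => rfl
    have huw : u - w = t • d := by rw [hudef]; abel
    have hnorm : ‖u - w‖ = t * ‖d‖ := by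
      rw [huw, norm_smul, Real.norm_eq_abs, abs_of_pos htpos]
    have htdj : ∀ j, t * |d j| ≤ t * ‖d‖ := fun j =>
      mul_le_mul_of_nonneg_left (by simpa using coord_le_norm d j) htpos.le
    have huC : u ∈ C := by
      rw [hC]
      refine ⟨?_, ?_, ?_⟩
      · intro j
        rw [huapp]
        by_cases hj : j ∈ K
        · have h1 : t * |d j| < m := lt_of_le_of_lt (htdj j) htdm
          have h2 := hmle j hj
          have := neg_abs_le (d j)
          nlinarith
        · rw [hd0 j hj, hwzero j hj]; norm_num
      · have : ∑ j, u j = ∑ j, w j + t * ∑ j, d j := by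
          simp only [huapp, Finset.sum_add_distrib, Finset.mul_sum]
        rw [this, hdsum]
        rw [hC] at hw
        rw [hw.2.1]; ring
      · refine le_trans (le_trans (Finset.card_le_card ?_) (le_of_eq hK)) le_rfl
        intro j hj
        simp only [Finset.mem_filter, Finset.mem_univ, true_and] at hj
        by_contra hjK
        exact hj (by rw [huapp, hd0 j hjK, hwzero j hjK]; ring)
    have hune : u ≠ w := by
      intro h
      have : t • d = 0 := by
        have := huw; rw [h, sub_self] at this; exact this.symm
      exact hd ((smul_eq_zero.mp this).resolve_left htpos.ne')
    have hlt : ‖u - w‖ < δ := by rw [hnorm]; exact htdlt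
    have := hprop u huC hune hlt
    rw [huw, real_inner_smul_right, norm_smul, Real.norm_eq_abs, abs_of_pos htpos] at this
    have h2 : ⟪v, d⟫ ≤ ε / ‖d‖ * ‖d‖ := le_of_mul_le_mul_left (by linarith) htpos
    rwa [div_mul_cancel₀ _ hdn.ne'] at h2
  ext v
  constructor
  · rintro ⟨w, vs, hwC', hwt, hvsN, hvst⟩
    intro ε hε
    refine ⟨δ₀, hδ₀pos, fun u hu hne hlt => ?_⟩
    have hzu := (hloc u hu hlt).2
    have hd0 : ∀ j ∉ K, (u - wbar) j = 0 := by
      intro j hj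
      have : (u - wbar) j = u j - wbar j := rfl
      rw [this, hzu j hj, hzero j hj, sub_zero]
    have hdsum : ∑ j, (u - wbar) j = 0 := by
      have h1 : ∀ j, (u - wbar) j = u j - wbar j := fun j => rfl
      simp only [h1, Finset.sum_sub_distrib]
      rw [hC] at hu hwC
      rw [hu.2.1, hwC.2.1, sub_self]
    have hle : ⟪v, u - wbar⟫ ≤ 0 := by
      have htend : Filter.Tendsto (fun j => ⟪vs j, u - wbar⟫) Filter.atTop
          (nhds ⟪v, u - wbar⟫) := hvst.inner tendsto_const_nhds
      refine le_of_tendsto htend ?_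
      have hev : ∀ᶠ j in Filter.atTop, w j ∈ Metric.ball wbar δ₀ :=
        hwt (Metric.ball_mem_nhds _ hδ₀pos)
      filter_upwards [hev] with j hj
      have : ‖w j - wbar‖ < δ₀ := by rw [← dist_eq_norm]; exact hj
      exact hkey (u - wbar) hd0 hdsum (w j) (hwC' j) this (vs j) (hvsN j)
    exact le_trans hle (mul_nonneg hε.le (norm_nonneg _))
  · intro hv
    exact ⟨fun _ => wbar, fun _ => v, fun _ => hwC, tendsto_const_nhds,
      fun _ => hv, tendsto_const_nhds⟩
end

section
/- Let C ⊆ ℝ^k be a nonempty closed convex set contained in the nonnegative orthant {x ∈ ℝ^k : x_i ≥ 0 for all i}, and define f(y) = −(1/2)‖y‖² + min_{z ∈ C} (1/2)‖y − z‖². Then f is antitone with respect to the componentwise order: if x, y ∈ ℝ^k satisfy x_i ≤ y_i for all i, then f(y) ≤ f(x). -/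
/-- For a nonempty closed convex set `C` contained in the nonnegative
orthant, the function `f(y) = −(1/2)‖y‖² + min_{z ∈ C} (1/2)‖y − z‖²` is antitone with
respect to the componentwise order: `x ≤ y` componentwise implies `f(y) ≤ f(x)`. -/
theorem stmt_12 (k : ℕ) (C : Set (EuclideanSpace ℝ (Fin k)))
    (hCne : C.Nonempty) (hCcl : IsClosed C) (hCcv : Convex ℝ C)
    (hCpos : ∀ z ∈ C, ∀ i, 0 ≤ z i)
    (f : EuclideanSpace ℝ (Fin k) → ℝ)
    (hf : ∀ y, f y = -(1 / 2) * ‖y‖ ^ 2 +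
      ⨅ z : C, (1 / 2) * ‖y - (z : EuclideanSpace ℝ (Fin k))‖ ^ 2) :
    ∀ x y : EuclideanSpace ℝ (Fin k), (∀ i, x i ≤ y i) → f y ≤ f x := by
  intro x y hxy
  haveI : Nonempty C := hCne.to_subtype
  have hbdd : BddBelow (Set.range fun z : C =>
      (1 / 2) * ‖y - (z : EuclideanSpace ℝ (Fin k))‖ ^ 2) := by
    refine ⟨0, ?_⟩
    rintro _ ⟨z, rfl⟩
    positivity
  have key : ∀ z : C,
      -(1 / 2) * ‖y‖ ^ 2 + (1 / 2) * ‖y - (z : EuclideanSpace ℝ (Fin k))‖ ^ 2 ≤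
      -(1 / 2) * ‖x‖ ^ 2 + (1 / 2) * ‖x - (z : EuclideanSpace ℝ (Fin k))‖ ^ 2 := by
    intro z
    have h1 := @norm_sub_sq_real (EuclideanSpace ℝ (Fin k)) _ _ y (z : EuclideanSpace ℝ (Fin k))
    have h2 := @norm_sub_sq_real (EuclideanSpace ℝ (Fin k)) _ _ x (z : EuclideanSpace ℝ (Fin k))
    have hinner : (inner ℝ x (z : EuclideanSpace ℝ (Fin k)) : ℝ) ≤
        inner ℝ y (z : EuclideanSpace ℝ (Fin k)) := by
      simp only [PiLp.inner_apply, RCLike.inner_apply, conj_trivial]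
      exact Finset.sum_le_sum fun i _ =>
        mul_le_mul_of_nonneg_left (hxy i) (hCpos z z.2 i)
    nlinarith [hinner]
  rw [hf, hf, ← sub_le_iff_le_add']
  refine le_ciInf fun z => ?_
  have h3 : (⨅ z : C, (1 / 2) * ‖y - (z : EuclideanSpace ℝ (Fin k))‖ ^ 2) ≤
      (1 / 2) * ‖y - (z : EuclideanSpace ℝ (Fin k))‖ ^ 2 := ciInf_le hbdd z
  have := key z
  linarith
end

section
/- Let n, k be natural numbers with 1 ≤ k ≤ n, let 0 ≤ p ≤ q ≤ 1, and let V = {z ∈ ℝⁿ : z ≥ 0 componentwise, p ≤ ∑_j z_j ≤ q, ‖z‖₀ ≤ k}. Let y ∈ ℝⁿ satisfy y_1 ≥ y_2 ≥ ... ≥ y_n. Then there exists a minimizer z* of ‖y − z‖ over V with z*_j = 0 for all j > k; that is, the projection of y onto V can be taken to be supported on the indices of the k largest components of y. -/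
/-- Projection onto the cardinality-and-budget-constrained set
`V = {z ≥ 0, p ≤ 1ᵀz ≤ q, ‖z‖₀ ≤ k}` of a vector `y` sorted in decreasing order can be
taken to be supported on the first `k` indices (the `k` largest components of `y`). -/
theorem stmt_13 (n k : ℕ) (hk1 : 1 ≤ k) (hkn : k ≤ n)
    (p q : ℝ) (hp : 0 ≤ p) (hpq : p ≤ q) (hq : q ≤ 1)
    (V : Set (EuclideanSpace ℝ (Fin n)))
    (hV : V = {z | (∀ j, 0 ≤ z j) ∧ (p ≤ ∑ j, z j ∧ ∑ j, z j ≤ q) ∧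
      (Finset.univ.filter (fun j => z j ≠ 0)).card ≤ k})
    (y : Fin n → ℝ) (hy : Antitone y) :
    ∃ zstar ∈ V, (∀ z ∈ V, ‖(WithLp.equiv 2 (Fin n → ℝ)).symm y - zstar‖ ≤
        ‖(WithLp.equiv 2 (Fin n → ℝ)).symm y - z‖) ∧
      ∀ j : Fin n, k ≤ (j : ℕ) → zstar j = 0 := by
  have hn : 0 < n := hk1.trans hkn
  set Y : EuclideanSpace ℝ (Fin n) := (WithLp.equiv 2 (Fin n → ℝ)).symm y with hY
  set V' : Set (EuclideanSpace ℝ (Fin n)) :=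
    {z | (∀ j, 0 ≤ z j) ∧ (p ≤ ∑ j, z j ∧ ∑ j, z j ≤ q) ∧
      ∀ j : Fin n, k ≤ (j : ℕ) → z j = 0} with hV'
  have hc : ∀ j : Fin n, Continuous fun z : EuclideanSpace ℝ (Fin n) => z j :=
    fun j => (EuclideanSpace.proj j).continuous
  -- V' ⊆ V
  have hV'V : V' ⊆ V := by
    rintro z ⟨h1, h2, h3⟩
    rw [hV]
    refine ⟨h1, h2, ?_⟩
    have hle : (Finset.univ.filter (fun j => z j ≠ 0)).card ≤
        (Finset.univ : Finset (Fin k)).card := by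
      refine Finset.card_le_card_of_injOn
        (fun j : Fin n => (⟨min (j : ℕ) (k-1), by omega⟩ : Fin k))
        (fun a _ => Finset.mem_univ _) ?_
      intro a ha b hb hab
      simp only [Finset.mem_coe, Finset.mem_filter] at ha hb
      have hak : (a : ℕ) < k := by by_contra h; exact ha.2 (h3 a (by omega))
      have hbk : (b : ℕ) < k := by by_contra h; exact hb.2 (h3 b (by omega))
      have h' : min (a : ℕ) (k-1) = min (b : ℕ) (k-1) := congrArg Fin.val hab
      exact Fin.ext (by omega)
    simpa using hle
  -- V' is nonempty
  have hne : V'.Nonempty := by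
    refine ⟨(WithLp.equiv 2 (Fin n → ℝ)).symm (fun j => if (j : ℕ) = 0 then p else 0),
      ?_, ?_, ?_⟩
    · intro j; simp only [WithLp.equiv_symm_apply, WithLp.ofLp_toLp]; positivity
    · have hsum0 : ∑ j : Fin n, (if (j : ℕ) = 0 then p else 0) = p := by
        rw [Finset.sum_eq_single (⟨0, hn⟩ : Fin n)]
        · simp
        · intro b _ hb
          have : (b : ℕ) ≠ 0 := fun h => hb (Fin.ext h)
          simp [this]
        · simp
      simp only [WithLp.equiv_symm_apply, WithLp.ofLp_toLp]
      rw [hsum0]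
      exact ⟨le_rfl, hpq⟩
    · intro j hj
      simp only [WithLp.equiv_symm_apply, WithLp.ofLp_toLp]
      have : (j : ℕ) ≠ 0 := by omega
      simp [this]
  -- V' is closed
  have hclosed : IsClosed V' := by
    have hsum : Continuous fun z : EuclideanSpace ℝ (Fin n) => ∑ j, z j :=
      continuous_finset_sum _ fun j _ => hc j
    rw [hV']
    simp only [Set.setOf_and]
    refine IsClosed.inter ?_ (IsClosed.inter (IsClosed.inter ?_ ?_) ?_)
    · rw [Set.setOf_forall]
      exact isClosed_iInter fun j => isClosed_le continuous_const (hc j)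
    · exact isClosed_le continuous_const hsum
    · exact isClosed_le hsum continuous_const
    · rw [Set.setOf_forall]
      refine isClosed_iInter fun j => ?_
      by_cases h : k ≤ (j : ℕ)
      · simp only [h, forall_true_left]
        exact isClosed_eq (hc j) continuous_const
      · simp [h]
  -- V' is bounded
  have hbdd : Bornology.IsBounded V' := by
    refine (Metric.isBounded_closedBall (x := (0 : EuclideanSpace ℝ (Fin n))) (r := 1)).subset ?_
    rintro z ⟨h1, h2, _⟩
    rw [Metric.mem_closedBall, dist_zero_right]
    rw [EuclideanSpace.norm_eq]
    have hsq : ∑ i, ‖z i‖ ^ 2 ≤ 1 := by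
      have h1' : ∑ i, ‖z i‖ ^ 2 = ∑ i, z i ^ 2 := by
        refine Finset.sum_congr rfl fun i _ => ?_
        rw [Real.norm_eq_abs, sq_abs]
      rw [h1']
      have hA : ∑ i, z i ^ 2 ≤ (∑ i, z i) ^ 2 :=
        Finset.sum_sq_le_sq_sum_of_nonneg fun i _ => h1 i
      have hB : (0:ℝ) ≤ ∑ i, z i := Finset.sum_nonneg fun i _ => h1 i
      nlinarith [h2.2]
    calc Real.sqrt (∑ i, ‖z i‖ ^ 2) ≤ Real.sqrt 1 := Real.sqrt_le_sqrt hsq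
      _ = 1 := Real.sqrt_one
  -- get a minimizer over V'
  have hcompact : IsCompact V' := Metric.isCompact_of_isClosed_isBounded hclosed hbdd
  have hcont : Continuous fun w : EuclideanSpace ℝ (Fin n) => ‖Y - w‖ :=
    (continuous_const.sub continuous_id).norm
  obtain ⟨zstar, hzs, hmin⟩ := hcompact.exists_isMinOn hne hcont.continuousOn
  refine ⟨zstar, hV'V hzs, ?_, hzs.2.2⟩
  intro z hz
  rw [hV] at hz
  obtain ⟨hz1, hz2, hz3⟩ := hz
  -- sort z decreasingly
  set σ : Equiv.Perm (Fin n) := Tuple.sort (fun i => -(z i)) with hσ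
  have hanti : Antitone fun i => z (σ i) := by
    have hm : Monotone ((fun i => -(z i)) ∘ σ) := Tuple.monotone_sort _
    intro a b hab
    have := hm hab
    simp only [Function.comp_apply, neg_le_neg_iff] at this
    exact this
  set z' : EuclideanSpace ℝ (Fin n) := (WithLp.equiv 2 (Fin n → ℝ)).symm (fun i => z (σ i))
    with hz'
  have hz'app : ∀ i, z' i = z (σ i) := fun i => rfl
  -- z' ∈ V'
  have hz'mem : z' ∈ V' := by
    refine ⟨fun j => hz1 _, ?_, ?_⟩
    · have : ∑ i, z (σ i) = ∑ i, z i := Equiv.sum_comp σ (fun i => z i)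
      simp only [hz'app]
      rw [this]
      exact hz2
    · intro j hj
      by_contra h0
      rw [hz'app] at h0
      have hpos : 0 < z (σ j) := lt_of_le_of_ne (hz1 _) (Ne.symm h0)
      -- card of support of z ∘ σ equals card of support of z
      have hcardeq : (Finset.univ.filter (fun i => z (σ i) ≠ 0)).card =
          (Finset.univ.filter (fun i => z i ≠ 0)).card := by
        apply Finset.card_bij (fun i _ => σ i)
        · intro a ha
          simp only [Finset.mem_filter, Finset.mem_univ, true_and] at ha ⊢
          exact ha
        · intro a _ b _ hab
          exact σ.injective hab
        · intro b hb
          simp only [Finset.mem_filter, Finset.mem_univ, true_and] at hb ⊢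
          refine ⟨σ.symm b, ?_, σ.apply_symm_apply b⟩
          rw [σ.apply_symm_apply]
          exact hb
      have hcount : (j : ℕ) + 1 ≤ (Finset.univ.filter (fun i => z (σ i) ≠ 0)).card := by
        have := Finset.card_le_card_of_injOn
          (f := fun i : Fin ((j : ℕ) + 1) => (⟨(i : ℕ), by omega⟩ : Fin n))
          (s := (Finset.univ : Finset (Fin ((j : ℕ) + 1))))
          (t := Finset.univ.filter (fun i => z (σ i) ≠ 0))
          (fun a _ => by
            simp only [Finset.coe_filter, Set.mem_setOf_eq, Finset.mem_filter, Finset.mem_univ, true_and]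
            have hle : (⟨(a : ℕ), by omega⟩ : Fin n) ≤ j := by
              simp [Fin.le_def]; omega
            have := hanti hle
            exact ne_of_gt (lt_of_lt_of_le hpos this))
          (fun a _ b _ hab => by
            have h' := congrArg Fin.val hab
            simp only at h'
            exact Fin.ext h')
        simpa using this
      omega
  -- ‖Y - z'‖ ≤ ‖Y - z‖
  have hkey : ‖Y - z'‖ ≤ ‖Y - z‖ := by
    rw [EuclideanSpace.norm_eq, EuclideanSpace.norm_eq]
    apply Real.sqrt_le_sqrt
    have happ : ∀ (w : EuclideanSpace ℝ (Fin n)) i, ‖(Y - w) i‖ ^ 2 = (y i - w i) ^ 2 := by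
      intro w i
      rw [Real.norm_eq_abs, sq_abs]
      congr 1
    simp only [happ]
    have hexp : ∀ w : Fin n → ℝ, ∑ i, (y i - w i) ^ 2 =
        ∑ i, y i ^ 2 - 2 * ∑ i, y i * w i + ∑ i, w i ^ 2 := by
      intro w
      rw [Finset.mul_sum, ← Finset.sum_sub_distrib, ← Finset.sum_add_distrib]
      refine Finset.sum_congr rfl fun i _ => by ring
    have e1 : ∑ i, (z' i) ^ 2 = ∑ i, (z i) ^ 2 := by
      simp only [hz'app]
      exact Equiv.sum_comp σ (fun i => z i ^ 2)
    have hmono : Monovary y (fun i => z (σ i)) := by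
      intro i j hij
      rcases le_total j i with h | h
      · exact hy h
      · exact absurd (hanti h) (not_le.2 hij)
    have e2 : ∑ i, y i * z i ≤ ∑ i, y i * z' i := by
      have := hmono.sum_mul_comp_perm_le_sum_mul (σ := σ⁻¹)
      simp only [hz'app]
      calc ∑ i, y i * z i = ∑ i, y i * z (σ (σ⁻¹ i)) := by
            refine Finset.sum_congr rfl fun i _ => by rw [← Equiv.Perm.mul_apply, mul_inv_cancel, Equiv.Perm.one_apply]
        _ ≤ ∑ i, y i * z (σ i) := this
    have h1 := hexp (fun i => z' i)
    have h2 := hexp (fun i => z i)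
    simp only at h1 h2
    rw [h1, h2, e1]
    linarith
  have := hmin hz'mem
  simp only [Set.mem_setOf_eq] at this
  exact le_trans this hkey
end
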